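/- For any set 𝒲 of probability measures on a measurable space (Y,𝒜), there exists a countable subset 𝒲' ⊂ 𝒲 such that C_α(𝒲') = C_α(𝒲) for every order α ∈ (0,∞] simultaneously. -/

import Mathlib

open MeasureTheory ENNReal Filter Topology

namespace RenyiPaper

open scoped Classical

variable {Y : Type*} [MeasurableSpace Y]

/-- The Kullback–Leibler divergence, i.e. the order-`1` Rényi divergence, with
values in `EReal`; it is `⊤` unless `W ≪ Q` and the log-likelihood ratio is integrable. -/
noncomputable def klDiv (W Q : Measure Y) : EReal :=
  if W ≪ Q ∧ Integrable (llr W Q) W then ((∫ y, llr W Q y ∂W : ℝ) : EReal) else ⊤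

/-- The integral `∫ (dW/dν)^α (dQ/dν)^{1-α} dν` (with `ν = W + Q`) appearing in the
definition of the order-`α` Rényi divergence for `α ∈ (0,1) ∪ (1,∞)`. -/
noncomputable def renyiIntegral (α : ℝ) (W Q : Measure Y) : ℝ≥0∞ :=
  ∫⁻ y, (W.rnDeriv (W + Q) y) ^ α * (Q.rnDeriv (W + Q) y) ^ (1 - α) ∂(W + Q)

/-- The order-`α` Rényi divergence `D_α(W‖Q)` for `α ∈ (0,∞]`. -/
noncomputable def renyiDiv (α : ℝ≥0∞) (W Q : Measure Y) : EReal :=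
  if α = ∞ then
    ENNReal.log (essSup (fun y => W.rnDeriv (W + Q) y / Q.rnDeriv (W + Q) y) (W + Q))
  else if α = 1 then klDiv W Q
  else (((α.toReal - 1)⁻¹ : ℝ) : EReal) * ENNReal.log (renyiIntegral α.toReal W Q)

/-- `P` is a finitely supported probability mass function on `𝒲`. -/
def IsFinPrior (𝒲 : Set (Measure Y)) (P : Measure Y → ℝ≥0∞) : Prop :=
  (Function.support P).Finite ∧ Function.support P ⊆ 𝒲 ∧ ∑' W, P W = 1

/-- A reference measure dominating every measure in the support of the prior `P`. -/
noncomputable def refMeasure (P : Measure Y → ℝ≥0∞) : Measure Y :=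
  Measure.sum (fun W : Function.support P => (W : Measure Y))

/-- The order-`α` mean measure `μ_{α,P}`. -/
noncomputable def meanMeasure (α : ℝ≥0∞) (P : Measure Y → ℝ≥0∞) : Measure Y :=
  (refMeasure P).withDensity fun y =>
    if α = ∞ then ⨆ W : Function.support P, (W : Measure Y).rnDeriv (refMeasure P) y
    else (∑' W : Function.support P,
        P W * ((W : Measure Y).rnDeriv (refMeasure P) y) ^ α.toReal) ^ α.toReal⁻¹

/-- The order-`α` Rényi mean `q_{α,P} = μ_{α,P} / ‖μ_{α,P}‖`. -/
noncomputable def renyiMean (α : ℝ≥0∞) (P : Measure Y → ℝ≥0∞) : Measure Y :=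
  (meanMeasure α P Set.univ)⁻¹ • meanMeasure α P

/-- The order-`α` Rényi information `I_α(P;𝒲)` of the prior `P`. -/
noncomputable def renyiInfo (α : ℝ≥0∞) (P : Measure Y → ℝ≥0∞) : EReal :=
  if α = ∞ then ENNReal.log (meanMeasure ∞ P Set.univ)
  else if α = 1 then
    ∑' W : Function.support P,
      ((P (W : Measure Y)).toReal : EReal) * klDiv (W : Measure Y) (meanMeasure 1 P)
  else ((α.toReal / (α.toReal - 1) : ℝ) : EReal) * ENNReal.log (meanMeasure α P Set.univ)

/-- The order-`α` Rényi capacity `C_α(𝒲)`. -/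
noncomputable def renyiCapacity (α : ℝ≥0∞) (𝒲 : Set (Measure Y)) : EReal :=
  ⨆ P ∈ {P : Measure Y → ℝ≥0∞ | IsFinPrior 𝒲 P}, renyiInfo α P

/-- The order-`α` Rényi radius of `𝒲` relative to `Q`, `S_α(𝒲‖Q)`. -/
noncomputable def relRadius (α : ℝ≥0∞) (𝒲 : Set (Measure Y)) (Q : Measure Y) : EReal :=
  ⨆ W ∈ 𝒲, renyiDiv α W Q

/-- The prior `P` viewed as a (discrete) measure on the space of measures. -/
noncomputable def priorMeasure (P : Measure Y → ℝ≥0∞) : Measure (Measure Y) :=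
  Measure.sum (fun W : Function.support P => P (W : Measure Y) • Measure.dirac (W : Measure Y))

/-- The joint measure `P ⊛ 𝒲`, whose first marginal is `P` and whose conditional
distribution given `W` is `W` itself. -/
noncomputable def jointMeasure (P : Measure Y → ℝ≥0∞) : Measure (Measure Y × Y) :=
  Measure.sum (fun W : Function.support P =>
    P (W : Measure Y) • ((Measure.dirac (W : Measure Y)).prod (W : Measure Y)))

/-- The product measure `P ⊗ Q`. -/
noncomputable def prodMeasure (P : Measure Y → ℝ≥0∞) (Q : Measure Y) : Measure (Measure Y × Y) :=
  (priorMeasure P).prod Q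

/-- The total variation distance `‖μ - ν‖` between two (finite) measures. -/
noncomputable def tvDist (μ ν : Measure Y) : ℝ≥0∞ :=
  ∫⁻ y, (μ.rnDeriv (μ + ν) y - ν.rnDeriv (μ + ν) y)
      + (ν.rnDeriv (μ + ν) y - μ.rnDeriv (μ + ν) y) ∂(μ + ν)

/-- The total variation distance `‖P₁ - P₂‖ = Σ_W |P₁(W) - P₂(W)|` between two priors. -/
noncomputable def priorDist (P₁ P₂ : Measure Y → ℝ≥0∞) : ℝ≥0∞ :=
  ∑' W, ((P₁ W - P₂ W) + (P₂ W - P₁ W))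

/-- `Q` is an order-`α` Rényi center of `𝒲`: a probability measure whose relative
Rényi radius equals the Rényi capacity. -/
def IsRenyiCenter (α : ℝ≥0∞) (𝒲 : Set (Measure Y)) (Q : Measure Y) : Prop :=
  IsProbabilityMeasure Q ∧ relRadius α 𝒲 Q = renyiCapacity α 𝒲


section PriorBasics

variable (P : Measure Y → ℝ≥0∞)

/-- The total mass `‖μ_{b,P}‖` as a function of the (real) order `b`. -/
noncomputable def Nf (b : ℝ) : ℝ≥0∞ :=
  ∫⁻ y, (∑' W : Function.support P,
      P W * ((W : Measure Y).rnDeriv (refMeasure P) y) ^ b) ^ b⁻¹ ∂(refMeasure P)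

/-- The Rényi information as a real-valued function of the (real) order `b`. -/
noncomputable def Ifun (b : ℝ) : ℝ := b / (b - 1) * Real.log (Nf P b).toReal

variable {P}

lemma meanMeasure_univ {α : ℝ≥0∞} (hα : α ≠ ∞) :
    meanMeasure α P Set.univ = Nf P α.toReal := by
  rw [meanMeasure, withDensity_apply _ MeasurableSet.univ, Measure.restrict_univ, Nf]
  simp only [if_neg hα]

variable (hfin : (Function.support P).Finite) (hsum : ∑' W, P W = 1)
    (hprob : ∀ W ∈ Function.support P, IsProbabilityMeasure W)

include hsum in
lemma tsum_support_eq_one : ∑' W : Function.support P, P W = 1 := by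
  rw [tsum_subtype, Set.indicator_support]; exact hsum

include hsum in
lemma prior_le_one (i : Function.support P) : P i ≤ 1 := by
  rw [← tsum_support_eq_one hsum]
  exact ENNReal.le_tsum i

include hsum in
lemma support_nonempty : Nonempty (Function.support P) := by
  by_contra h
  rw [not_nonempty_iff] at h
  have hz : ∀ W, P W = 0 := fun W => of_not_not (fun hW => h.elim ⟨W, Function.mem_support.mpr hW⟩)
  simp [hz] at hsum

include hfin hprob in
lemma refMeasure_finite : IsFiniteMeasure (refMeasure P) := by
  haveI := hfin.fintype
  constructor
  rw [refMeasure, Measure.sum_apply _ MeasurableSet.univ, tsum_fintype]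
  have : ∀ i : Function.support P, (i : Measure Y) Set.univ = 1 := fun i =>
    (hprob _ i.2).measure_univ
  simp only [this]
  simp [ENNReal.sum_lt_top]

lemma absCont (i : Function.support P) : (i : Measure Y) ≪ refMeasure P :=
  (Measure.le_sum (fun W : Function.support P => (W : Measure Y)) i).absolutelyContinuous

include hfin hprob in
lemma lintegral_rnDeriv_eq_one (i : Function.support P) :
    ∫⁻ y, (i : Measure Y).rnDeriv (refMeasure P) y ∂(refMeasure P) = 1 := by
  haveI := refMeasure_finite hfin hprob
  haveI := hprob _ i.2
  rw [Measure.lintegral_rnDeriv (absCont i)]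
  exact (hprob _ i.2).measure_univ

end PriorBasics
section NfBounds

variable {P : Measure Y → ℝ≥0∞}
variable (hfin : (Function.support P).Finite) (hsum : ∑' W, P W = 1)
    (hprob : ∀ W ∈ Function.support P, IsProbabilityMeasure W)

include hfin hsum hprob in
lemma Nf_lt_top {b : ℝ} (hb : 0 < b) : Nf P b < ∞ := by
  haveI := hfin.countable.to_subtype
  haveI := hfin.fintype
  have hpt : ∀ y, (∑' W : Function.support P,
      P W * ((W : Measure Y).rnDeriv (refMeasure P) y) ^ b) ^ b⁻¹
      ≤ ∑' W : Function.support P, (W : Measure Y).rnDeriv (refMeasure P) y := by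
    intro y
    set m := ∑' W : Function.support P, (W : Measure Y).rnDeriv (refMeasure P) y with hm
    have h1 : (∑' W : Function.support P,
        P W * ((W : Measure Y).rnDeriv (refMeasure P) y) ^ b) ≤ m ^ b := by
      calc (∑' W : Function.support P,
          P W * ((W : Measure Y).rnDeriv (refMeasure P) y) ^ b)
          ≤ ∑' W : Function.support P, P W * m ^ b :=
            Summable.tsum_le_tsum (fun i => mul_le_mul_right
              (ENNReal.rpow_le_rpow (ENNReal.le_tsum i) hb.le) _)
              ENNReal.summable ENNReal.summable
        _ = (∑' W : Function.support P, P W) * m ^ b := ENNReal.tsum_mul_right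
        _ = m ^ b := by rw [tsum_support_eq_one hsum, one_mul]
    calc (∑' W : Function.support P,
        P W * ((W : Measure Y).rnDeriv (refMeasure P) y) ^ b) ^ b⁻¹
        ≤ (m ^ b) ^ b⁻¹ := ENNReal.rpow_le_rpow h1 (inv_nonneg.2 hb.le)
      _ = m := by rw [← ENNReal.rpow_mul, mul_inv_cancel₀ hb.ne', ENNReal.rpow_one]
  calc Nf P b ≤ ∫⁻ y, ∑' W : Function.support P,
        (W : Measure Y).rnDeriv (refMeasure P) y ∂(refMeasure P) := lintegral_mono hpt
    _ = ∑' W : Function.support P,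
        ∫⁻ y, (W : Measure Y).rnDeriv (refMeasure P) y ∂(refMeasure P) :=
          lintegral_tsum (fun i => (Measure.measurable_rnDeriv _ _).aemeasurable)
    _ = ∑' _ : Function.support P, 1 := by
          congr 1; ext i; exact lintegral_rnDeriv_eq_one hfin hprob i
    _ < ∞ := by rw [tsum_fintype]; simp [ENNReal.sum_lt_top]

include hfin hsum hprob in
lemma Nf_pos {b : ℝ} (hb : 0 < b) : 0 < Nf P b := by
  obtain ⟨i₀⟩ := support_nonempty hsum
  have key : (P i₀) ^ b⁻¹ *
      ∫⁻ y, (i₀ : Measure Y).rnDeriv (refMeasure P) y ∂(refMeasure P) ≤ Nf P b := by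
    rw [← lintegral_const_mul _ (Measure.measurable_rnDeriv _ _)]
    apply lintegral_mono
    intro y
    simp only []
    show (P i₀) ^ b⁻¹ * (i₀ : Measure Y).rnDeriv (refMeasure P) y ≤ _
    have heq : (P i₀) ^ b⁻¹ * (i₀ : Measure Y).rnDeriv (refMeasure P) y
        = (P i₀ * ((i₀ : Measure Y).rnDeriv (refMeasure P) y) ^ b) ^ b⁻¹ := by
      rw [ENNReal.mul_rpow_of_nonneg _ _ (inv_nonneg.2 hb.le), ← ENNReal.rpow_mul,
        mul_inv_cancel₀ hb.ne', ENNReal.rpow_one]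
    rw [heq]
    exact ENNReal.rpow_le_rpow (ENNReal.le_tsum i₀) (inv_nonneg.2 hb.le)
  rw [lintegral_rnDeriv_eq_one hfin hprob i₀, mul_one] at key
  refine lt_of_lt_of_le ?_ key
  exact ENNReal.rpow_pos (pos_iff_ne_zero.2 i₀.2) (lt_of_le_of_lt (prior_le_one hsum i₀)
    ENNReal.one_lt_top).ne

include hfin hsum hprob in
lemma Nf_one : Nf P 1 = 1 := by
  haveI := hfin.countable.to_subtype
  rw [Nf]
  simp only [inv_one, ENNReal.rpow_one]
  rw [lintegral_tsum (fun i => ((Measure.measurable_rnDeriv _ _).const_mul _).aemeasurable)]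
  have : ∀ i : Function.support P,
      ∫⁻ y, P i * (i : Measure Y).rnDeriv (refMeasure P) y ∂(refMeasure P) = P i := by
    intro i
    rw [lintegral_const_mul _ (Measure.measurable_rnDeriv _ _),
      lintegral_rnDeriv_eq_one hfin hprob i, mul_one]
  simp only [this]
  exact tsum_support_eq_one hsum

end NfBounds
section Chord

lemma tsum_mul_le_holder {ι : Type*} [Countable ι] (F G : ι → ℝ≥0∞) {r r' : ℝ}
    (h : r.HolderConjugate r') :
    ∑' i, F i * G i ≤ (∑' i, F i ^ r) ^ (1 / r) * (∑' i, G i ^ r') ^ (1 / r') := by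
  letI : MeasurableSpace ι := ⊤
  haveI : MeasurableSingletonClass ι := ⟨fun _ => trivial⟩
  rw [← lintegral_count (fun i => F i * G i), ← lintegral_count (fun i => F i ^ r),
    ← lintegral_count (fun i => G i ^ r')]
  exact ENNReal.lintegral_mul_le_Lp_mul_Lq _ h measurable_from_top.aemeasurable
    measurable_from_top.aemeasurable

/-- The integrand of `Nf`. -/
noncomputable def gfun (P : Measure Y → ℝ≥0∞) (c : ℝ) (y : Y) : ℝ≥0∞ :=
  (∑' W : Function.support P, P W * ((W : Measure Y).rnDeriv (refMeasure P) y) ^ c) ^ c⁻¹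

variable {P : Measure Y → ℝ≥0∞}

lemma Nf_eq_lintegral_gfun (c : ℝ) : Nf P c = ∫⁻ y, gfun P c y ∂(refMeasure P) := rfl

lemma gfun_measurable [Countable (Function.support P)] (c : ℝ) :
    Measurable (gfun P c) :=
  (Measurable.ennreal_tsum (fun _ =>
    ((Measure.measurable_rnDeriv _ _).pow_const _).const_mul _)).pow_const _

variable (hfin : (Function.support P).Finite)

include hfin in
lemma Nf_chord {b₁ b b₂ : ℝ} (h1 : 0 < b₁) (h12 : b₁ < b) (h23 : b < b₂) :
    Nf P b ≤ Nf P b₁ ^ (b₁ * (b₂ - b) / (b * (b₂ - b₁)))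
      * Nf P b₂ ^ (b₂ * (b - b₁) / (b * (b₂ - b₁))) := by
  haveI := hfin.countable.to_subtype
  have hb : 0 < b := h1.trans h12
  have hb2 : 0 < b₂ := hb.trans h23
  have hd1 : 0 < b₂ - b := by linarith
  have hd2 : 0 < b - b₁ := by linarith
  have hd : 0 < b₂ - b₁ := by linarith
  set r : ℝ := (b₂ - b₁) / (b₂ - b) with hr
  set r' : ℝ := (b₂ - b₁) / (b - b₁) with hr'
  have hrpos : 0 < r := by positivity
  have hrpos' : 0 < r' := by positivity
  have hconj : r.HolderConjugate r' := by
    refine ⟨?_, hrpos, hrpos'⟩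
    rw [inv_one, hr, hr', inv_div, inv_div, ← add_div, div_eq_one_iff_eq hd.ne']; ring
  set lam : ℝ := b₁ * (b₂ - b) / (b * (b₂ - b₁)) with hlam
  set mu : ℝ := b₂ * (b - b₁) / (b * (b₂ - b₁)) with hmu
  have hlam_pos : 0 < lam := by positivity
  have hmu_pos : 0 < mu := by positivity
  have hlm : lam + mu = 1 := by rw [hlam, hmu]; field_simp; ring
  -- arithmetic identities for exponents
  have hexp1 : b₁ / r + b₂ / r' = b := by rw [hr, hr']; field_simp; ring
  have hexp2 : 1 / r * b⁻¹ = b₁⁻¹ * lam := by rw [hr, hlam]; field_simp; try ring_nf; try exact Or.inl trivial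
  have hexp3 : 1 / r' * b⁻¹ = b₂⁻¹ * mu := by rw [hr', hmu]; field_simp; try ring_nf; try exact Or.inl trivial
  -- pointwise bound
  have hpt : ∀ y, gfun P b y ≤ gfun P b₁ y ^ lam * gfun P b₂ y ^ mu := by
    intro y
    set f : Function.support P → ℝ≥0∞ :=
      fun W => (W : Measure Y).rnDeriv (refMeasure P) y with hf
    have hsplit : ∀ W : Function.support P, P W * f W ^ b
        = (P W ^ r⁻¹ * f W ^ (b₁ / r)) * (P W ^ r'⁻¹ * f W ^ (b₂ / r')) := by
      intro W
      have e1 : (P W : ℝ≥0∞) = P W ^ r⁻¹ * P W ^ r'⁻¹ := by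
        rw [← ENNReal.rpow_add_of_nonneg _ _ (by positivity) (by positivity),
          hconj.inv_add_inv_eq_one, ENNReal.rpow_one]
      have e2 : f W ^ b = f W ^ (b₁ / r) * f W ^ (b₂ / r') := by
        rw [← ENNReal.rpow_add_of_nonneg _ _ (by positivity) (by positivity), hexp1]
      calc P W * f W ^ b = (P W ^ r⁻¹ * P W ^ r'⁻¹) * (f W ^ (b₁ / r) * f W ^ (b₂ / r')) := by
            rw [← e1, ← e2]
        _ = (P W ^ r⁻¹ * f W ^ (b₁ / r)) * (P W ^ r'⁻¹ * f W ^ (b₂ / r')) := by ring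
    have hholder : (∑' W : Function.support P, P W * f W ^ b)
        ≤ (∑' W : Function.support P, P W * f W ^ b₁) ^ (1 / r)
          * (∑' W : Function.support P, P W * f W ^ b₂) ^ (1 / r') := by
      calc (∑' W : Function.support P, P W * f W ^ b)
          = ∑' W : Function.support P,
            (P W ^ r⁻¹ * f W ^ (b₁ / r)) * (P W ^ r'⁻¹ * f W ^ (b₂ / r')) :=
            tsum_congr hsplit
        _ ≤ (∑' W : Function.support P, (P W ^ r⁻¹ * f W ^ (b₁ / r)) ^ r) ^ (1 / r)
            * (∑' W : Function.support P, (P W ^ r'⁻¹ * f W ^ (b₂ / r')) ^ r') ^ (1 / r') :=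
            tsum_mul_le_holder _ _ hconj
        _ = (∑' W : Function.support P, P W * f W ^ b₁) ^ (1 / r)
            * (∑' W : Function.support P, P W * f W ^ b₂) ^ (1 / r') := by
            have c1 : ∀ W : Function.support P,
                (P W ^ r⁻¹ * f W ^ (b₁ / r)) ^ r = P W * f W ^ b₁ := fun W => by
              rw [ENNReal.mul_rpow_of_nonneg _ _ hrpos.le, ← ENNReal.rpow_mul,
                ← ENNReal.rpow_mul, inv_mul_cancel₀ hrpos.ne', div_mul_cancel₀ _ hrpos.ne',
                ENNReal.rpow_one]
            have c2 : ∀ W : Function.support P,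
                (P W ^ r'⁻¹ * f W ^ (b₂ / r')) ^ r' = P W * f W ^ b₂ := fun W => by
              rw [ENNReal.mul_rpow_of_nonneg _ _ hrpos'.le, ← ENNReal.rpow_mul,
                ← ENNReal.rpow_mul, inv_mul_cancel₀ hrpos'.ne', div_mul_cancel₀ _ hrpos'.ne',
                ENNReal.rpow_one]
            rw [tsum_congr c1, tsum_congr c2]
    have hb1inv : ((b₁)⁻¹ * lam) = (1 / r) * b⁻¹ := hexp2.symm
    calc gfun P b y = (∑' W : Function.support P, P W * f W ^ b) ^ b⁻¹ := rfl
      _ ≤ ((∑' W : Function.support P, P W * f W ^ b₁) ^ (1 / r)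
          * (∑' W : Function.support P, P W * f W ^ b₂) ^ (1 / r')) ^ b⁻¹ :=
          ENNReal.rpow_le_rpow hholder (by positivity)
      _ = gfun P b₁ y ^ lam * gfun P b₂ y ^ mu := by
          rw [ENNReal.mul_rpow_of_nonneg _ _ (by positivity), ← ENNReal.rpow_mul,
            ← ENNReal.rpow_mul, hexp2, hexp3, gfun, gfun, ← ENNReal.rpow_mul,
            ← ENNReal.rpow_mul]
  -- integral Hölder
  have hconj2 : (1 / lam).HolderConjugate (1 / mu) := by
    refine ⟨?_, by positivity, by positivity⟩
    rw [one_div, one_div, inv_inv, inv_inv, inv_one]; exact hlm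
  calc Nf P b = ∫⁻ y, gfun P b y ∂(refMeasure P) := rfl
    _ ≤ ∫⁻ y, (gfun P b₁ y ^ lam) * (gfun P b₂ y ^ mu) ∂(refMeasure P) := lintegral_mono hpt
    _ ≤ (∫⁻ y, (gfun P b₁ y ^ lam) ^ (1 / lam) ∂(refMeasure P)) ^ (1 / (1 / lam))
        * (∫⁻ y, (gfun P b₂ y ^ mu) ^ (1 / mu) ∂(refMeasure P)) ^ (1 / (1 / mu)) :=
        ENNReal.lintegral_mul_le_Lp_mul_Lq _ hconj2
          (((gfun_measurable b₁).pow_const _).aemeasurable)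
          (((gfun_measurable b₂).pow_const _).aemeasurable)
    _ = Nf P b₁ ^ lam * Nf P b₂ ^ mu := by
        rw [one_div_one_div, one_div_one_div]
        have d1 : ∀ y, (gfun P b₁ y ^ lam) ^ (1 / lam) = gfun P b₁ y := fun y => by
          rw [← ENNReal.rpow_mul, mul_one_div, div_self hlam_pos.ne', ENNReal.rpow_one]
        have d2 : ∀ y, (gfun P b₂ y ^ mu) ^ (1 / mu) = gfun P b₂ y := fun y => by
          rw [← ENNReal.rpow_mul, mul_one_div, div_self hmu_pos.ne', ENNReal.rpow_one]
        rw [lintegral_congr d1, lintegral_congr d2, Nf_eq_lintegral_gfun b₁, Nf_eq_lintegral_gfun b₂]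

end Chord
section RealLayer

variable {P : Measure Y → ℝ≥0∞}

/-- Abbreviation for the real log of the total mass. -/
noncomputable def Lf (P : Measure Y → ℝ≥0∞) (b : ℝ) : ℝ := Real.log (Nf P b).toReal

variable (hfin : (Function.support P).Finite) (hsum : ∑' W, P W = 1)
    (hprob : ∀ W ∈ Function.support P, IsProbabilityMeasure W)

include hfin hsum hprob in
lemma NtoReal_pos {b : ℝ} (hb : 0 < b) : 0 < (Nf P b).toReal :=
  ENNReal.toReal_pos (Nf_pos hfin hsum hprob hb).ne' (Nf_lt_top hfin hsum hprob hb).ne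

include hfin hsum hprob in
lemma Lf_chord {b₁ b b₂ : ℝ} (h1 : 0 < b₁) (h12 : b₁ < b) (h23 : b < b₂) :
    Lf P b ≤ (b₁ * (b₂ - b) / (b * (b₂ - b₁))) * Lf P b₁
      + (b₂ * (b - b₁) / (b * (b₂ - b₁))) * Lf P b₂ := by
  have hb : 0 < b := h1.trans h12
  have hb2 : 0 < b₂ := hb.trans h23
  have hd1 : (0:ℝ) < b₂ - b := by linarith
  have hd2 : (0:ℝ) < b - b₁ := by linarith
  have hd : (0:ℝ) < b₂ - b₁ := by linarith
  set lam : ℝ := b₁ * (b₂ - b) / (b * (b₂ - b₁)) with hlam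
  set mu : ℝ := b₂ * (b - b₁) / (b * (b₂ - b₁)) with hmu
  have hlam0 : 0 ≤ lam := le_of_lt (by rw [hlam]; positivity)
  have hmu0 : 0 ≤ mu := le_of_lt (by rw [hmu]; positivity)
  have hkey := Nf_chord hfin h1 h12 h23
  have h1top : Nf P b₁ ^ lam ≠ ∞ :=
    ENNReal.rpow_ne_top_of_nonneg hlam0 (Nf_lt_top hfin hsum hprob h1).ne
  have h2top : Nf P b₂ ^ mu ≠ ∞ :=
    ENNReal.rpow_ne_top_of_nonneg hmu0 (Nf_lt_top hfin hsum hprob hb2).ne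
  have hreal : (Nf P b).toReal ≤ (Nf P b₁).toReal ^ lam * (Nf P b₂).toReal ^ mu := by
    rw [ENNReal.toReal_rpow, ENNReal.toReal_rpow, ← ENNReal.toReal_mul]
    exact ENNReal.toReal_mono (by exact ENNReal.mul_ne_top h1top h2top) hkey
  have hlog := Real.log_le_log (NtoReal_pos hfin hsum hprob hb) hreal
  rw [Real.log_mul (Real.rpow_pos_of_pos (NtoReal_pos hfin hsum hprob h1) _).ne'
      (Real.rpow_pos_of_pos (NtoReal_pos hfin hsum hprob hb2) _).ne', Real.log_rpow
      (NtoReal_pos hfin hsum hprob h1), Real.log_rpow (NtoReal_pos hfin hsum hprob hb2)]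
      at hlog
  exact hlog

include hfin hsum hprob in
lemma Lf_one : Lf P 1 = 0 := by
  rw [Lf, Nf_one hfin hsum hprob]; simp

include hfin hsum hprob in
lemma Ifun_mono_gt_one {b a : ℝ} (hb : 1 < b) (hba : b < a) : Ifun P b ≤ Ifun P a := by
  have h := Lf_chord hfin hsum hprob one_pos hb hba
  rw [Lf_one hfin hsum hprob, mul_zero, zero_add] at h
  have hcb : (0:ℝ) < b / (b - 1) := by
    apply div_pos <;> linarith
  have hb0 : b ≠ 0 := by linarith
  have hb1 : b - 1 ≠ 0 := by linarith
  have ha1 : a - 1 ≠ 0 := by linarith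
  have hid : b / (b - 1) * (a * (b - 1) / (b * (a - 1))) = a / (a - 1) := by
    field_simp
  have := mul_le_mul_of_nonneg_left h hcb.le
  calc Ifun P b = b / (b - 1) * Lf P b := rfl
    _ ≤ b / (b - 1) * (a * (b - 1) / (b * (a - 1)) * Lf P a) := this
    _ = a / (a - 1) * Lf P a := by rw [← mul_assoc, hid]
    _ = Ifun P a := rfl

include hfin hsum hprob in
lemma Ifun_mono_lt_one {b a : ℝ} (hb : 0 < b) (hba : b < a) (ha : a < 1) :
    Ifun P b ≤ Ifun P a := by
  have h := Lf_chord hfin hsum hprob hb hba ha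
  rw [Lf_one hfin hsum hprob, mul_zero, add_zero] at h
  have hca : a / (a - 1) ≤ 0 := by
    apply div_nonpos_of_nonneg_of_nonpos <;> linarith
  have := mul_le_mul_of_nonpos_left h hca
  have hb1 : b - 1 ≠ 0 := by linarith
  have ha1 : a - 1 ≠ 0 := by linarith
  have ha0 : a ≠ 0 := by linarith
  have hb1' : 1 - b ≠ 0 := by linarith
  have hid : a / (a - 1) * (b * (1 - a) / (a * (1 - b))) = b / (b - 1) := by
    field_simp
    ring
  calc Ifun P b = b / (b - 1) * Lf P b := rfl
    _ = a / (a - 1) * (b * (1 - a) / (a * (1 - b)) * Lf P b) := by rw [← mul_assoc, hid]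
    _ ≤ a / (a - 1) * Lf P a := this
    _ = Ifun P a := rfl

end RealLayer
section ContLayer

variable {P : Measure Y → ℝ≥0∞}
variable (hfin : (Function.support P).Finite) (hsum : ∑' W, P W = 1)
    (hprob : ∀ W ∈ Function.support P, IsProbabilityMeasure W)

include hfin hsum hprob in
lemma tendsto_Ifun_gt_one {a : ℝ} (ha : 1 < a) (u : ℕ → ℝ)
    (hu : ∀ n, 1 < u n ∧ u n < a) (hlim : Tendsto u atTop (𝓝 a)) :
    Tendsto (fun n => Ifun P (u n)) atTop (𝓝 (Ifun P a)) := by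
  set γ : ℝ := a + 1 with hγ
  set F : ℝ → ℝ := fun q =>
    q / (q - 1) * ((Lf P a - γ * (a - q) / (a * (γ - q)) * Lf P γ)
      / (q * (γ - a) / (a * (γ - q)))) with hF
  have ha0 : (0:ℝ) < a := by linarith
  -- lower bound F (u n) ≤ Ifun P (u n)
  have hlb : ∀ n, F (u n) ≤ Ifun P (u n) := by
    intro n
    obtain ⟨h1, h2⟩ := hu n
    have hq0 : (0:ℝ) < u n := by linarith
    have hch := Lf_chord hfin hsum hprob hq0 h2 (show a < γ by rw [hγ]; linarith)
    have hlampos : (0:ℝ) < a * (γ - a) / (γ * (γ - u n)) := by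
      apply div_pos <;> [skip; skip] <;> [nlinarith; nlinarith]
    -- note: in Lf_chord with b₁ = u n, b = a, b₂ = γ :
    -- Lf a ≤ (u n * (γ - a)/(a * (γ - u n))) * Lf (u n) + (γ * (a - u n)/(a * (γ - u n))) * Lf γ
    set lamq : ℝ := u n * (γ - a) / (a * (γ - u n)) with hlamq
    set muq : ℝ := γ * (a - u n) / (a * (γ - u n)) with hmuq
    have hlamq_pos : 0 < lamq := by rw [hlamq]; apply div_pos <;> nlinarith
    have hLq : (Lf P a - muq * Lf P γ) / lamq ≤ Lf P (u n) := by
      rw [div_le_iff₀ hlamq_pos]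
      calc Lf P a - muq * Lf P γ ≤ lamq * Lf P (u n) + muq * Lf P γ - muq * Lf P γ := by
            linarith [hch]
        _ = Lf P (u n) * lamq := by ring
    have hcq : (0:ℝ) ≤ u n / (u n - 1) := by
      apply le_of_lt; apply div_pos <;> linarith
    have := mul_le_mul_of_nonneg_left hLq hcq
    calc F (u n) = u n / (u n - 1) * ((Lf P a - muq * Lf P γ) / lamq) := rfl
      _ ≤ u n / (u n - 1) * Lf P (u n) := this
      _ = Ifun P (u n) := rfl
  -- upper bound
  have hub : ∀ n, Ifun P (u n) ≤ Ifun P a :=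
    fun n => Ifun_mono_gt_one hfin hsum hprob (hu n).1 (hu n).2
  -- limit of F (u n)
  have hFlim : Tendsto (fun n => F (u n)) atTop (𝓝 (Ifun P a)) := by
    have hne1 : a - 1 ≠ 0 := by linarith
    have hne2 : a * (γ - a) ≠ 0 := by rw [hγ]; nlinarith
    have t1 : Tendsto (fun n => u n / (u n - 1)) atTop (𝓝 (a / (a - 1))) :=
      (hlim.div ((hlim.sub_const 1)) hne1)
    have t2 : Tendsto (fun n => γ * (a - u n) / (a * (γ - u n))) atTop
        (𝓝 (γ * (a - a) / (a * (γ - a)))) := by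
      apply Filter.Tendsto.div
      · exact (tendsto_const_nhds.sub hlim).const_mul γ
      · exact (tendsto_const_nhds.sub hlim).const_mul a
      · exact hne2
    have t3 : Tendsto (fun n => u n * (γ - a) / (a * (γ - u n))) atTop
        (𝓝 (a * (γ - a) / (a * (γ - a)))) := by
      apply Filter.Tendsto.div
      · exact hlim.mul_const _
      · exact (tendsto_const_nhds.sub hlim).const_mul a
      · exact hne2
    have hdenne : a * (γ - a) / (a * (γ - a)) ≠ 0 := by
      rw [div_self hne2]; exact one_ne_zero
    have tF : Tendsto (fun n => F (u n)) atTop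
        (𝓝 (a / (a - 1) * ((Lf P a - γ * (a - a) / (a * (γ - a)) * Lf P γ)
          / (a * (γ - a) / (a * (γ - a)))))) := by
      apply Tendsto.mul t1
      apply Filter.Tendsto.div
      · exact tendsto_const_nhds.sub (t2.mul_const _)
      · exact t3
      · exact hdenne
    have hval : a / (a - 1) * ((Lf P a - γ * (a - a) / (a * (γ - a)) * Lf P γ)
        / (a * (γ - a) / (a * (γ - a)))) = Ifun P a := by
      rw [sub_self, mul_zero, zero_div, zero_mul, sub_zero, div_self hne2, div_one]
      rfl
    rwa [hval] at tF
  exact tendsto_of_tendsto_of_tendsto_of_le_of_le hFlim tendsto_const_nhds hlb hub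

include hfin hsum hprob in
lemma tendsto_Ifun_lt_one {a : ℝ} (ha0 : 0 < a) (ha : a < 1) (u : ℕ → ℝ)
    (hu : ∀ n, a / 2 < u n ∧ u n < a) (hlim : Tendsto u atTop (𝓝 a)) :
    Tendsto (fun n => Ifun P (u n)) atTop (𝓝 (Ifun P a)) := by
  set b₀ : ℝ := a / 2 with hb₀
  set F : ℝ → ℝ := fun q =>
    q / (q - 1) * (b₀ * (a - q) / (q * (a - b₀)) * Lf P b₀
      + a * (q - b₀) / (q * (a - b₀)) * Lf P a) with hF
  have hb₀pos : 0 < b₀ := by rw [hb₀]; linarith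
  have hlb : ∀ n, F (u n) ≤ Ifun P (u n) := by
    intro n
    obtain ⟨h1, h2⟩ := hu n
    have hq0 : (0:ℝ) < u n := lt_trans hb₀pos h1
    have hq1 : u n < 1 := by linarith
    have hch := Lf_chord hfin hsum hprob hb₀pos h1 h2
    have hcq : u n / (u n - 1) ≤ 0 := by
      apply div_nonpos_of_nonneg_of_nonpos <;> linarith
    have := mul_le_mul_of_nonpos_left hch hcq
    calc F (u n) = u n / (u n - 1) * (b₀ * (a - u n) / (u n * (a - b₀)) * Lf P b₀
        + a * (u n - b₀) / (u n * (a - b₀)) * Lf P a) := rfl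
      _ ≤ u n / (u n - 1) * Lf P (u n) := this
      _ = Ifun P (u n) := rfl
  have hub : ∀ n, Ifun P (u n) ≤ Ifun P a :=
    fun n => Ifun_mono_lt_one hfin hsum hprob (lt_trans hb₀pos (hu n).1) (hu n).2 ha
  have hFlim : Tendsto (fun n => F (u n)) atTop (𝓝 (Ifun P a)) := by
    have hne1 : a - 1 ≠ 0 := by linarith
    have hne2 : a * (a - b₀) ≠ 0 := by rw [hb₀]; nlinarith
    have t1 : Tendsto (fun n => u n / (u n - 1)) atTop (𝓝 (a / (a - 1))) :=
      (hlim.div ((hlim.sub_const 1)) hne1)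
    have t2 : Tendsto (fun n => b₀ * (a - u n) / (u n * (a - b₀))) atTop
        (𝓝 (b₀ * (a - a) / (a * (a - b₀)))) := by
      apply Filter.Tendsto.div
      · exact (tendsto_const_nhds.sub hlim).const_mul b₀
      · exact hlim.mul_const _
      · exact hne2
    have t3 : Tendsto (fun n => a * (u n - b₀) / (u n * (a - b₀))) atTop
        (𝓝 (a * (a - b₀) / (a * (a - b₀)))) := by
      apply Filter.Tendsto.div
      · exact (hlim.sub_const b₀).const_mul a
      · exact hlim.mul_const _
      · exact hne2
    have tF : Tendsto (fun n => F (u n)) atTop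
        (𝓝 (a / (a - 1) * (b₀ * (a - a) / (a * (a - b₀)) * Lf P b₀
          + a * (a - b₀) / (a * (a - b₀)) * Lf P a))) := by
      apply Tendsto.mul t1
      exact (t2.mul_const _).add (t3.mul_const _)
    have hval : a / (a - 1) * (b₀ * (a - a) / (a * (a - b₀)) * Lf P b₀
        + a * (a - b₀) / (a * (a - b₀)) * Lf P a) = Ifun P a := by
      rw [sub_self, mul_zero, zero_div, zero_mul, zero_add, div_self hne2, one_mul]
      rfl
    rwa [hval] at tF
  exact tendsto_of_tendsto_of_tendsto_of_le_of_le hFlim tendsto_const_nhds hlb hub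

end ContLayer
section Glue

lemma exists_countable_biSup_eq {ι : Type*} (s : Set ι) (g : ι → EReal) :
    ∃ t : Set ι, t ⊆ s ∧ t.Countable ∧ (⨆ x ∈ t, g x) = ⨆ x ∈ s, g x := by
  rcases s.eq_empty_or_nonempty with rfl | hs
  · exact ⟨∅, by simp⟩
  obtain ⟨u, hmono, htend, hmem⟩ :=
    exists_seq_tendsto_sSup (hs.image g) (OrderTop.bddAbove _)
  have hval : ∀ n, ∃ a, a ∈ s ∧ g a = u n := fun n => hmem n
  choose x hx hgx using hval
  refine ⟨Set.range x, Set.range_subset_iff.2 hx, Set.countable_range x, le_antisymm ?_ ?_⟩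
  · refine iSup₂_le fun y hy => ?_
    obtain ⟨n, rfl⟩ := hy
    exact le_iSup₂ (f := fun y (_ : y ∈ s) => g y) (x n) (hx n)
  · rw [← sSup_image]
    refine le_of_tendsto htend (Filter.Eventually.of_forall fun n => ?_)
    rw [← hgx n]
    exact le_iSup₂ (f := fun y (_ : y ∈ Set.range x) => g y) (x n) ⟨n, rfl⟩

variable {P : Measure Y → ℝ≥0∞}

lemma renyiCapacity_def (α : ℝ≥0∞) (𝒲 : Set (Measure Y)) :
    renyiCapacity α 𝒲 = ⨆ P ∈ {P : Measure Y → ℝ≥0∞ | IsFinPrior 𝒲 P}, renyiInfo α P := rfl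

lemma renyiInfo_le_renyiCapacity {𝒲 : Set (Measure Y)} (hP : IsFinPrior 𝒲 P) (α : ℝ≥0∞) :
    renyiInfo α P ≤ renyiCapacity α 𝒲 :=
  le_iSup₂ (f := fun P (_ : P ∈ {P : Measure Y → ℝ≥0∞ | IsFinPrior 𝒲 P}) => renyiInfo α P) P hP

lemma renyiCapacity_mono_set {𝒲₁ 𝒲₂ : Set (Measure Y)} (h : 𝒲₁ ⊆ 𝒲₂) (α : ℝ≥0∞) :
    renyiCapacity α 𝒲₁ ≤ renyiCapacity α 𝒲₂ :=
  iSup₂_le fun P hP => renyiInfo_le_renyiCapacity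
    ⟨hP.1, hP.2.1.trans h, hP.2.2⟩ α

variable (hfin : (Function.support P).Finite) (hsum : ∑' W, P W = 1)
    (hprob : ∀ W ∈ Function.support P, IsProbabilityMeasure W)

include hfin hsum hprob in
lemma renyiInfo_coe {α : ℝ≥0∞} (h0 : α ≠ 0) (h1 : α ≠ 1) (ht : α ≠ ∞) :
    renyiInfo α P = ((Ifun P α.toReal : ℝ) : EReal) := by
  have ha : 0 < α.toReal := ENNReal.toReal_pos h0 ht
  rw [renyiInfo, if_neg ht, if_neg h1, meanMeasure_univ ht]
  have hlog : ENNReal.log (Nf P α.toReal)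
      = ((Real.log (Nf P α.toReal).toReal : ℝ) : EReal) := by
    rw [ENNReal.log, if_neg (Nf_pos hfin hsum hprob ha).ne',
      if_neg (Nf_lt_top hfin hsum hprob ha).ne]
  rw [hlog, ← EReal.coe_mul]
  rfl

end Glue
/-- There is a countable subset `𝒲' ⊆ 𝒲` whose Rényi capacity agrees with that of `𝒲`
at every order `α ∈ (0,∞]` simultaneously. -/
theorem countable_subset_same_capacity {Y : Type*} [MeasurableSpace Y]
    (𝒲 : Set (Measure Y)) (h𝒲 : ∀ W ∈ 𝒲, IsProbabilityMeasure W) :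
    ∃ 𝒲' : Set (Measure Y), 𝒲' ⊆ 𝒲 ∧ 𝒲'.Countable ∧
      ∀ α : ℝ≥0∞, 0 < α → renyiCapacity α 𝒲' = renyiCapacity α 𝒲 := by
  classical
  set p𝒲 := {P : Measure Y → ℝ≥0∞ | IsFinPrior 𝒲 P} with hp𝒲
  have hsel : ∀ β : ℝ≥0∞, ∃ t, t ⊆ p𝒲 ∧ t.Countable ∧
      (⨆ P ∈ t, renyiInfo β P) = renyiCapacity β 𝒲 := by
    intro β
    obtain ⟨t, h1, h2, h3⟩ := exists_countable_biSup_eq p𝒲 (renyiInfo β)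
    exact ⟨t, h1, h2, h3.trans (renyiCapacity_def β 𝒲).symm⟩
  choose T hT1 hT2 hT3 using hsel
  set A : Set ℝ≥0∞ := insert ∞ (Set.range (fun q : ℚ => ENNReal.ofReal q)) with hA
  set 𝒲' : Set (Measure Y) := ⋃ β ∈ A, ⋃ P ∈ T β, Function.support P with h𝒲'
  have hsub : 𝒲' ⊆ 𝒲 :=
    Set.iUnion₂_subset fun β _ => Set.iUnion₂_subset fun P hP => (hT1 β hP).2.1
  have hcount : 𝒲'.Countable := by
    refine Set.Countable.biUnion ((Set.countable_range _).insert ∞) fun β _ => ?_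
    exact Set.Countable.biUnion (hT2 β) fun P hP => (hT1 β hP).1.countable
  have hle : ∀ α, renyiCapacity α 𝒲' ≤ renyiCapacity α 𝒲 :=
    fun α => renyiCapacity_mono_set hsub α
  have hAeq : ∀ β ∈ A, renyiCapacity β 𝒲 = renyiCapacity β 𝒲' := by
    intro β hβ
    refine le_antisymm ?_ (hle β)
    rw [← hT3 β]
    refine iSup₂_le fun P hP => ?_
    refine renyiInfo_le_renyiCapacity ⟨(hT1 β hP).1, ?_, (hT1 β hP).2.2⟩ β
    intro W hW
    exact Set.mem_biUnion hβ (Set.mem_biUnion hP hW)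
  refine ⟨𝒲', hsub, hcount, ?_⟩
  intro α hα0
  by_cases htop : α = ∞
  · subst htop
    exact (hAeq ∞ (Set.mem_insert _ _)).symm
  by_cases h1 : α = 1
  · subst h1
    refine (hAeq 1 (Set.mem_insert_iff.2 (Or.inr ⟨(1 : ℚ), ?_⟩))).symm
    simp
  -- main case : 0 < α < ∞, α ≠ 1
  have ha0 : 0 < α.toReal := ENNReal.toReal_pos hα0.ne' htop
  have ha1 : α.toReal ≠ 1 := fun h => h1 (by rwa [ENNReal.toReal_eq_one_iff] at h)
  set a : ℝ := α.toReal with haa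
  set lo : ℝ := if a < 1 then a / 2 else 1 with hlo
  have hlo_pos : 0 < lo := by
    rw [hlo]; split <;> [linarith; norm_num]
  have hlo_lt : lo < a := by
    rw [hlo]; split
    · linarith
    · rename_i h; exact lt_of_le_of_ne (not_lt.1 h) (Ne.symm ha1)
  set S : EReal := ⨆ q : ℚ, ⨆ _ : lo < (q : ℝ) ∧ (q : ℝ) < a,
    renyiCapacity (ENNReal.ofReal (q : ℝ)) 𝒲 with hS
  -- facts about admissible rationals
  have hqfacts : ∀ q : ℚ, lo < (q : ℝ) → (q : ℝ) < a →
      (0 < (q:ℝ) ∧ ENNReal.ofReal (q:ℝ) ≠ 0 ∧ ENNReal.ofReal (q:ℝ) ≠ 1 ∧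
        (ENNReal.ofReal (q:ℝ)).toReal = (q:ℝ)) := by
    intro q hq1 hq2
    have hq0 : (0:ℝ) < q := lt_trans hlo_pos hq1
    have hqne1 : (q:ℝ) ≠ 1 := by
      rw [hlo] at hq1
      by_cases hcase : a < 1
      · rw [if_pos hcase] at hq1; exact ne_of_lt (lt_trans hq2 hcase)
      · rw [if_neg hcase] at hq1; exact (ne_of_gt hq1)
    refine ⟨hq0, (ENNReal.ofReal_pos.2 hq0).ne', ?_, ENNReal.toReal_ofReal hq0.le⟩
    intro h
    apply hqne1
    rw [← ENNReal.toReal_ofReal hq0.le, h]; simp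
  -- (1) renyiCapacity α 𝒲 ≤ S
  have step1 : renyiCapacity α 𝒲 ≤ S := by
    rw [renyiCapacity_def]
    refine iSup₂_le fun P hP => ?_
    have hfin := hP.1
    have hsum := hP.2.2
    have hprob : ∀ W ∈ Function.support P, IsProbabilityMeasure W :=
      fun W hW => h𝒲 W (hP.2.1 hW)
    rw [renyiInfo_coe hfin hsum hprob hα0.ne' h1 htop]
    -- rational sequence increasing to a
    have hseq : ∀ n : ℕ, ∃ q : ℚ, max lo (a - 1 / (n + 1)) < (q : ℝ) ∧ (q : ℝ) < a := by
      intro n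
      apply exists_rat_btwn
      apply max_lt hlo_lt
      have : (0:ℝ) < 1 / (n + 1) := by positivity
      linarith
    choose u hu1 hu2 using hseq
    have hcond : ∀ n, lo < (u n : ℝ) ∧ (u n : ℝ) < a :=
      fun n => ⟨lt_of_le_of_lt (le_max_left _ _) (hu1 n), hu2 n⟩
    have hulim : Tendsto (fun n : ℕ => (u n : ℝ)) atTop (𝓝 a) := by
      have hlow : Tendsto (fun n : ℕ => a - 1 / (n + 1 : ℝ)) atTop (𝓝 a) := by
        have h := tendsto_one_div_add_atTop_nhds_zero_nat (𝕜 := ℝ)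
        have h2 : Tendsto (fun _ : ℕ => a) atTop (𝓝 a) := tendsto_const_nhds
        simpa using h2.sub h
      refine tendsto_of_tendsto_of_tendsto_of_le_of_le hlow tendsto_const_nhds
        (fun n => ?_) (fun n => (hu2 n).le)
      exact (le_max_right lo _).trans (hu1 n).le
    have hIlim : Tendsto (fun n => Ifun P (u n)) atTop (𝓝 (Ifun P a)) := by
      by_cases hcase : a < 1
      · refine tendsto_Ifun_lt_one hfin hsum hprob ha0 hcase _ (fun n => ?_) hulim
        have := hcond n
        rw [hlo, if_pos hcase] at this
        exact this
      · have hagt : 1 < a := lt_of_le_of_ne (not_lt.1 hcase) (Ne.symm ha1)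
        refine tendsto_Ifun_gt_one hfin hsum hprob hagt _ (fun n => ?_) hulim
        have := hcond n
        rw [hlo, if_neg hcase] at this
        exact this
    refine le_of_tendsto (EReal.tendsto_coe.2 hIlim)
      (Filter.Eventually.of_forall fun n => ?_)
    obtain ⟨hq0, hne0, hne1, hofr⟩ := hqfacts (u n) (hcond n).1 (hcond n).2
    calc ((Ifun P (u n) : ℝ) : EReal)
        = renyiInfo (ENNReal.ofReal ((u n : ℝ))) P := by
          rw [renyiInfo_coe hfin hsum hprob hne0 hne1 ENNReal.ofReal_ne_top, hofr]
      _ ≤ renyiCapacity (ENNReal.ofReal ((u n : ℝ))) 𝒲 := renyiInfo_le_renyiCapacity hP _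
      _ ≤ S := by
          rw [hS]
          exact le_iSup₂ (f := fun (q : ℚ) (_ : lo < (q : ℝ) ∧ (q : ℝ) < a) =>
            renyiCapacity (ENNReal.ofReal (q : ℝ)) 𝒲) (u n) (hcond n)
  -- (2) S ≤ renyiCapacity α 𝒲'
  have step2 : S ≤ renyiCapacity α 𝒲' := by
    rw [hS]
    refine iSup₂_le fun q hq => ?_
    obtain ⟨hq0, hne0, hne1, hofr⟩ := hqfacts q hq.1 hq.2
    rw [hAeq (ENNReal.ofReal (q : ℝ)) (Set.mem_insert_iff.2 (Or.inr ⟨q, rfl⟩))]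
    rw [renyiCapacity_def, renyiCapacity_def]
    refine iSup₂_le fun P' hP' => ?_
    have hfin' := hP'.1
    have hsum' := hP'.2.2
    have hprob' : ∀ W ∈ Function.support P', IsProbabilityMeasure W :=
      fun W hW => h𝒲 W (hsub (hP'.2.1 hW))
    have hmono : Ifun P' (q : ℝ) ≤ Ifun P' a := by
      by_cases hcase : a < 1
      · have h2 := hq.1
        rw [hlo, if_pos hcase] at h2
        exact Ifun_mono_lt_one hfin' hsum' hprob' hq0 hq.2 hcase
      · have h2 := hq.1
        rw [hlo, if_neg hcase] at h2
        exact Ifun_mono_gt_one hfin' hsum' hprob' h2 hq.2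
    calc renyiInfo (ENNReal.ofReal (q : ℝ)) P'
        = ((Ifun P' (q : ℝ) : ℝ) : EReal) := by
          rw [renyiInfo_coe hfin' hsum' hprob' hne0 hne1 ENNReal.ofReal_ne_top, hofr]
      _ ≤ ((Ifun P' a : ℝ) : EReal) := EReal.coe_le_coe_iff.2 hmono
      _ = renyiInfo α P' := (renyiInfo_coe hfin' hsum' hprob' hα0.ne' h1 htop).symm
      _ ≤ ⨆ P ∈ {P : Measure Y → ℝ≥0∞ | IsFinPrior 𝒲' P}, renyiInfo α P :=
          le_iSup₂ (f := fun P (_ : P ∈ {P : Measure Y → ℝ≥0∞ | IsFinPrior 𝒲' P}) =>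
            renyiInfo α P) P' hP'
  exact le_antisymm (hle α) (step1.trans step2)

end RenyiPaper
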